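/- Let à be the integer matrix [[0,1],[2,1]] (arising from the Thue–Morse substitution 1 ↦ 1 1̄, 1̄ ↦ 1̄ 1 on collared tiles) and let G := {v ∈ ℚ² : Ãⁿ v ∈ ℤ² for some n ∈ ℕ}. Then G = {a·(1,2) + b·(1,−1) + c·(1,0) : a ∈ ℤ[1/2], b, c ∈ ℤ}, and moreover G is the internal direct sum of its subgroups V := {a·(1,2) : a ∈ ℤ[1/2]} and ℤ·(0,1); in particular G ≅ ℤ[1/2] ⊕ ℤ. -/

import Mathlib

private lemma stepA (v : Fin 2 → ℚ) :
    (!![(0 : ℚ), 1; 2, 1]).mulVec v = ![v 1, 2 * v 0 + v 1] := by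
  funext i
  fin_cases i <;> simp [Matrix.mulVec, dotProduct, Fin.sum_univ_two]

private lemma keyF : ∀ (n : ℕ) (v : Fin 2 → ℚ),
    (∀ i, ∃ z : ℤ, ((!![(0 : ℚ), 1; 2, 1]) ^ n).mulVec v i = (z : ℚ)) →
    (∃ (k : ℤ) (m : ℕ), v 0 = (k : ℚ) / 2 ^ m) ∧ ∃ z : ℤ, 2 * v 0 - v 1 = (z : ℚ) := by
  intro n
  induction n with
  | zero =>
    intro v h
    simp only [pow_zero, Matrix.one_mulVec] at h
    obtain ⟨z0, h0⟩ := h 0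
    obtain ⟨z1, h1⟩ := h 1
    exact ⟨⟨z0, 0, by simp [h0]⟩, 2 * z0 - z1, by push_cast [h0, h1]; ring⟩
  | succ n ih =>
    intro v h
    have h' : ∀ i, ∃ z : ℤ,
        ((!![(0 : ℚ), 1; 2, 1]) ^ n).mulVec ((!![(0 : ℚ), 1; 2, 1]).mulVec v) i = (z : ℚ) := by
      intro i
      rw [Matrix.mulVec_mulVec, ← pow_succ]
      exact h i
    obtain ⟨⟨k, m, hk⟩, z, hz⟩ := ih _ h'
    rw [stepA] at hk hz
    simp only [Matrix.cons_val_zero, Matrix.cons_val_one, Matrix.head_cons] at hk hz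
    have hz' : v 1 - 2 * v 0 = (z : ℚ) := by linarith
    refine ⟨⟨k - z * 2 ^ m, m + 1, ?_⟩, -z, ?_⟩
    · have h2 : (2 : ℚ) ^ m ≠ 0 := by positivity
      field_simp
      have : v 0 = (v 1 - z) / 2 := by linarith
      rw [this, hk]
      field_simp
      push_cast
      ring
    · push_cast; linarith

private lemma keyB : ∀ (m : ℕ) (k : ℤ) (v : Fin 2 → ℚ), v 0 = (k : ℚ) / 2 ^ m →
    (∃ z : ℤ, 2 * v 0 - v 1 = (z : ℚ)) →
    ∃ n : ℕ, ∀ i, ∃ z : ℤ, ((!![(0 : ℚ), 1; 2, 1]) ^ n).mulVec v i = (z : ℚ) := by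
  intro m
  induction m with
  | zero =>
    rintro k v h0 ⟨z, hz⟩
    refine ⟨0, ?_⟩
    intro i
    simp only [pow_zero, Matrix.one_mulVec]
    fin_cases i
    · exact ⟨k, by simpa using h0⟩
    · refine ⟨2 * k - z, ?_⟩
      simp only [pow_zero, div_one] at h0
      push_cast
      linarith
  | succ m ih =>
    rintro k v h0 ⟨z, hz⟩
    have hw0 : ((!![(0 : ℚ), 1; 2, 1]).mulVec v) 0 = ((k - z * 2 ^ m : ℤ) : ℚ) / 2 ^ m := by
      rw [stepA]
      simp only [Matrix.cons_val_zero]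
      have h2 : (2 : ℚ) ^ m ≠ 0 := by positivity
      have : v 1 = 2 * v 0 - z := by linarith
      rw [this, h0]
      push_cast
      field_simp
      ring
    have hwz : ∃ z' : ℤ, 2 * ((!![(0 : ℚ), 1; 2, 1]).mulVec v) 0
        - ((!![(0 : ℚ), 1; 2, 1]).mulVec v) 1 = (z' : ℚ) := by
      refine ⟨-z, ?_⟩
      rw [stepA]
      simp only [Matrix.cons_val_zero, Matrix.cons_val_one, Matrix.head_cons]
      push_cast
      linarith
    obtain ⟨n, hn⟩ := ih _ _ hw0 hwz
    refine ⟨n + 1, ?_⟩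
    intro i
    rw [pow_succ, ← Matrix.mulVec_mulVec]
    exact hn i

/-- Let `Ã = [[0,1],[2,1]]` (Thue–Morse on collared tiles) and
`G = {v ∈ ℚ² : Ãⁿ v ∈ ℤ² for some n}`.  Then
`G = {a·(1,2) + b·(1,−1) + c·(1,0) : a ∈ ℤ[1/2], b, c ∈ ℤ}`, and `G` is the internal
direct sum of `V = ℤ[1/2]·(1,2)` and `L = ℤ·(0,1)`; in particular `G ≅ ℤ[1/2] ⊕ ℤ`. -/
theorem stmt18 (G V L : AddSubgroup (Fin 2 → ℚ)) (Z2 : AddSubgroup ℚ)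
    (hG : (G : Set (Fin 2 → ℚ)) =
      {v | ∃ n : ℕ, ∀ i, ∃ z : ℤ, ((!![(0 : ℚ), 1; 2, 1]) ^ n).mulVec v i = (z : ℚ)})
    (hV : (V : Set (Fin 2 → ℚ)) =
      {v | ∃ a : ℚ, (∃ (k : ℤ) (m : ℕ), a = (k : ℚ) / 2 ^ m) ∧ v = a • ![1, 2]})
    (hL : (L : Set (Fin 2 → ℚ)) = {v | ∃ c : ℤ, v = (c : ℚ) • ![0, 1]})
    (hZ2 : (Z2 : Set ℚ) = {q | ∃ (k : ℤ) (m : ℕ), q = (k : ℚ) / 2 ^ m}) :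
    (G : Set (Fin 2 → ℚ)) =
      {v | ∃ (a : ℚ) (b c : ℤ), (∃ (k : ℤ) (m : ℕ), a = (k : ℚ) / 2 ^ m) ∧
        v = a • ![1, 2] + (b : ℚ) • ![1, -1] + (c : ℚ) • ![1, 0]} ∧
    V ⊓ L = ⊥ ∧ V ⊔ L = G ∧ Nonempty (G ≃+ Z2 × ℤ) := by
  have charG : ∀ v : Fin 2 → ℚ, v ∈ G ↔
      ((∃ (k : ℤ) (m : ℕ), v 0 = (k : ℚ) / 2 ^ m) ∧ ∃ z : ℤ, 2 * v 0 - v 1 = (z : ℚ)) := by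
    intro v
    constructor
    · intro hv
      have hv' : v ∈ (G : Set (Fin 2 → ℚ)) := hv
      rw [hG] at hv'
      obtain ⟨n, hn⟩ := hv'
      exact keyF n v hn
    · rintro ⟨⟨k, m, hk⟩, hz⟩
      have : v ∈ (G : Set (Fin 2 → ℚ)) := by
        rw [hG]
        exact keyB m k v hk hz
      exact this
  -- Part 1
  have part1 : (G : Set (Fin 2 → ℚ)) =
      {v | ∃ (a : ℚ) (b c : ℤ), (∃ (k : ℤ) (m : ℕ), a = (k : ℚ) / 2 ^ m) ∧
        v = a • ![1, 2] + (b : ℚ) • ![1, -1] + (c : ℚ) • ![1, 0]} := by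
    ext v
    simp only [SetLike.mem_coe, Set.mem_setOf_eq]
    constructor
    · intro hv
      obtain ⟨⟨k, m, hk⟩, z, hz⟩ := (charG v).1 hv
      refine ⟨v 0, z, -z, ⟨k, m, hk⟩, ?_⟩
      funext i
      fin_cases i <;>
        simp [Pi.add_apply, Pi.smul_apply, smul_eq_mul] <;>
        push_cast <;> linarith
    · rintro ⟨a, b, c, ⟨k, m, hk⟩, rfl⟩
      apply (charG _).2
      have h2 : (2 : ℚ) ^ m ≠ 0 := by positivity
      constructor
      · refine ⟨k + (b + c) * 2 ^ m, m, ?_⟩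
        simp only [Pi.add_apply, Pi.smul_apply, smul_eq_mul, Matrix.cons_val_zero]
        rw [hk]
        push_cast
        field_simp
        ring
      · refine ⟨3 * b + 2 * c, ?_⟩
        simp only [Pi.add_apply, Pi.smul_apply, smul_eq_mul, Matrix.cons_val_zero,
          Matrix.cons_val_one, Matrix.head_cons]
        push_cast
        ring
  refine ⟨part1, ?_, ?_, ?_⟩
  -- Part 2
  · rw [eq_bot_iff]
    intro v hv
    have hv1 : v ∈ (V : Set (Fin 2 → ℚ)) := hv.1
    have hv2 : v ∈ (L : Set (Fin 2 → ℚ)) := hv.2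
    rw [hV] at hv1
    rw [hL] at hv2
    obtain ⟨a, _, rfl⟩ := hv1
    obtain ⟨c, hc⟩ := hv2
    have ha : a = 0 := by
      have := congrFun hc 0
      simpa using this
    rw [AddSubgroup.mem_bot, ha, zero_smul]
  -- Part 3
  · apply le_antisymm
    · apply sup_le
      · intro v hv
        have hv' : v ∈ (V : Set (Fin 2 → ℚ)) := hv
        rw [hV] at hv'
        obtain ⟨a, ⟨k, m, hk⟩, rfl⟩ := hv'
        apply (charG _).2
        refine ⟨⟨k, m, by simpa using hk⟩, 0, ?_⟩
        simp [Pi.smul_apply, smul_eq_mul]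
        ring
      · intro v hv
        have hv' : v ∈ (L : Set (Fin 2 → ℚ)) := hv
        rw [hL] at hv'
        obtain ⟨c, rfl⟩ := hv'
        apply (charG _).2
        refine ⟨⟨0, 0, by simp⟩, -c, ?_⟩
        push_cast
        simp [Pi.smul_apply, smul_eq_mul]
    · intro v hv
      obtain ⟨⟨k, m, hk⟩, z, hz⟩ := (charG v).1 hv
      apply AddSubgroup.mem_sup.2
      refine ⟨v 0 • ![1, 2], ?_, ((-z : ℤ) : ℚ) • ![0, 1], ?_, ?_⟩
      · have : v 0 • ![(1:ℚ), 2] ∈ (V : Set (Fin 2 → ℚ)) := by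
          rw [hV]; exact ⟨v 0, ⟨k, m, hk⟩, rfl⟩
        exact this
      · have : ((-z : ℤ) : ℚ) • ![(0:ℚ), 1] ∈ (L : Set (Fin 2 → ℚ)) := by
          rw [hL]; exact ⟨-z, rfl⟩
        exact this
      · funext i
        fin_cases i <;>
          simp [Pi.add_apply, Pi.smul_apply, smul_eq_mul] <;>
          push_cast <;> linarith
  -- Part 4
  · have memZ2 : ∀ v : G, (v : Fin 2 → ℚ) 0 ∈ Z2 := by
      intro v
      have : (v : Fin 2 → ℚ) 0 ∈ (Z2 : Set ℚ) := by
        rw [hZ2]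
        exact ((charG _).1 v.2).1
      exact this
    have memG : ∀ (p : Z2 × ℤ), ((p.1 : ℚ) • ![1, 2] + ((p.2 : ℤ) : ℚ) • ![0, 1]) ∈ G := by
      rintro ⟨a, z⟩
      have ha : (a : ℚ) ∈ (Z2 : Set ℚ) := a.2
      rw [hZ2] at ha
      obtain ⟨k, m, hk⟩ := ha
      apply (charG _).2
      constructor
      · exact ⟨k, m, by simpa using hk⟩
      · refine ⟨-z, ?_⟩
        push_cast
        simp [Pi.add_apply, Pi.smul_apply, smul_eq_mul]
        ring
    refine ⟨{
      toFun := fun v => (⟨(v : Fin 2 → ℚ) 0, memZ2 v⟩, ⌊(v : Fin 2 → ℚ) 1 - 2 * (v : Fin 2 → ℚ) 0⌋),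
      invFun := fun p => ⟨(p.1 : ℚ) • ![1, 2] + ((p.2 : ℤ) : ℚ) • ![0, 1], memG p⟩,
      left_inv := ?_, right_inv := ?_, map_add' := ?_ }⟩
    · rintro ⟨v, hv⟩
      obtain ⟨_, z, hz⟩ := (charG v).1 hv
      apply Subtype.ext
      simp only
      have hfl : v 1 - 2 * v 0 = ((-z : ℤ) : ℚ) := by push_cast; linarith
      rw [hfl, Int.floor_intCast]
      funext i
      fin_cases i <;>
        simp [Pi.add_apply, Pi.smul_apply, smul_eq_mul] <;>
        push_cast <;> linarith
    · rintro ⟨a, z⟩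
      refine Prod.ext (Subtype.ext ?_) ?_
      · simp only [Pi.add_apply, Pi.smul_apply, smul_eq_mul, Matrix.cons_val_zero]
        ring
      · simp only [Pi.add_apply, Pi.smul_apply, smul_eq_mul, Matrix.cons_val_zero,
          Matrix.cons_val_one, Matrix.head_cons]
        have h : (a : ℚ) * 2 + (z : ℚ) * 1 - 2 * ((a : ℚ) * 1 + (z : ℚ) * 0)
            = ((z : ℤ) : ℚ) := by push_cast; ring
        rw [h, Int.floor_intCast]
    · rintro ⟨v, hv⟩ ⟨w, hw⟩
      obtain ⟨_, zv, hzv⟩ := (charG v).1 hv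
      obtain ⟨_, zw, hzw⟩ := (charG w).1 hw
      refine Prod.ext ?_ ?_
      · apply Subtype.ext
        simp
      · simp only [Prod.snd_add]
        have h1 : (v + w) 1 - 2 * (v + w) 0 = ((-zv + -zw : ℤ) : ℚ) := by
          simp only [Pi.add_apply]
          push_cast
          linarith
        have h2 : v 1 - 2 * v 0 = ((-zv : ℤ) : ℚ) := by push_cast; linarith
        have h3 : w 1 - 2 * w 0 = ((-zw : ℤ) : ℚ) := by push_cast; linarith
        have hvw : ((⟨v, hv⟩ + ⟨w, hw⟩ : G) : Fin 2 → ℚ) = v + w := rfl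
        rw [hvw, h1, h2, h3, Int.floor_intCast, Int.floor_intCast, Int.floor_intCast]
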